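/- Let n > 2 be an integer. Then the ring 𝕋ₙ(𝔽₂) of n×n upper triangular matrices over 𝔽₂ is almost n-torsion clean if and only if n = 2ˡ for some integer l ≥ 2. -/

import Mathlib

def AlmostTorsionClean (R : Type*) [Ring R] (m : ℕ) : Prop :=
  ∀ r : R, ∃ u e : R, IsUnit u ∧ u ^ m = 1 ∧ e * e = e ∧ r = u + e

def TorsionClean (R : Type*) [Ring R] (m : ℕ) : Prop :=
  AlmostTorsionClean R m ∧ ∀ k : ℕ, 0 < k → k < m → ¬ AlmostTorsionClean R k

/-- The ring of n×n upper triangular matrices over 𝔽₂, as a subring of the full matrix ring. -/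
def Triangular (n : ℕ) : Subring (Matrix (Fin n) (Fin n) (ZMod 2)) where
  carrier := {A | A.BlockTriangular id}
  zero_mem' := Matrix.blockTriangular_zero
  one_mem' := Matrix.blockTriangular_one
  add_mem' := fun ha hb => ha.add hb
  neg_mem' := fun ha => ha.neg
  mul_mem' := fun ha hb => ha.mul hb

section TriAuxSec
variable {n : ℕ}

lemma zmod2_mul_eq_one_left : ∀ a b : ZMod 2, a * b = 1 → a = 1 := by decide

lemma zmod2_zero_eq_one_add : ∀ b : ZMod 2, (0 : ZMod 2) = 1 + b → b = 1 := by decide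

lemma zmod2_mul_self : ∀ a : ZMod 2, a * a = a := by decide

lemma zmod2_sub_add_one : ∀ a : ZMod 2, a - (a + 1) = 1 := by decide

lemma mem_tri {A : Matrix (Fin n) (Fin n) (ZMod 2)} (h : A ∈ Triangular n) :
    A.BlockTriangular id := h

lemma diag_mul {A B : Matrix (Fin n) (Fin n) (ZMod 2)} (hA : A.BlockTriangular id)
    (hB : B.BlockTriangular id) (i : Fin n) : (A * B) i i = A i i * B i i := by
  rw [Matrix.mul_apply]
  apply Finset.sum_eq_single i
  · intro k _ hk
    rcases lt_or_gt_of_ne hk with h | h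
    · rw [hA (show id k < id i from h), zero_mul]
    · rw [hB (show id i < id k from h), mul_zero]
  · intro h; exact absurd (Finset.mem_univ i) h

lemma pow_entry_zero {A : Matrix (Fin n) (Fin n) (ZMod 2)} (hA : A.BlockTriangular id)
    (hd : ∀ i, A i i = 0) : ∀ k (i j : Fin n), (j : ℕ) < (i : ℕ) + k → (A ^ k) i j = 0 := by
  intro k
  induction k with
  | zero =>
    intro i j hij
    rw [pow_zero, Matrix.one_apply_ne]
    intro h; subst h; omega
  | succ k ih =>
    intro i j hij
    rw [pow_succ, Matrix.mul_apply]
    apply Finset.sum_eq_zero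
    intro l _
    by_cases hl : (l : ℕ) < (i : ℕ) + k
    · rw [ih i l hl, zero_mul]
    · have hjl : (j : ℕ) ≤ (l : ℕ) := by omega
      rcases eq_or_lt_of_le hjl with h | h
      · have : j = l := Fin.ext h
        subst this
        rw [hd j, mul_zero]
      · rw [hA (show id j < id l from h), mul_zero]

lemma pow_n_zero {A : Matrix (Fin n) (Fin n) (ZMod 2)} (hA : A.BlockTriangular id)
    (hd : ∀ i, A i i = 0) : A ^ n = 0 := by
  ext i j
  rw [pow_entry_zero hA hd n i j (by have := j.isLt; omega)]
  rfl

lemma diag_one_of_isUnit (hn : 0 < n) {x : Triangular n} (h : IsUnit x) (i : Fin n) :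
    (x : Matrix (Fin n) (Fin n) (ZMod 2)) i i = 1 := by
  obtain ⟨v, hv⟩ := h.exists_right_inv
  have hm := congrArg Subtype.val hv
  push_cast at hm
  have h2 := congrFun (congrFun hm i) i
  rw [diag_mul (mem_tri x.2) (mem_tri v.2) i] at h2
  rw [Matrix.one_apply_eq] at h2
  exact zmod2_mul_eq_one_left _ _ h2

lemma unit_of_diag_one (hn : 0 < n) (x : Triangular n)
    (hd : ∀ i, (x : Matrix (Fin n) (Fin n) (ZMod 2)) i i = 1) (L : ℕ) (hL : n ≤ 2 ^ L) :
    x ^ (2 ^ L) = 1 ∧ IsUnit x := by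
  haveI : Nonempty (Fin n) := ⟨⟨0, hn⟩⟩
  haveI : Fact (Nat.Prime 2) := ⟨Nat.prime_two⟩
  set N : Triangular n := x - 1 with hNdef
  have hNval : (N : Matrix (Fin n) (Fin n) (ZMod 2))
      = (x : Matrix (Fin n) (Fin n) (ZMod 2)) - 1 := by
    push_cast [hNdef]; ring
  have hNtri : (N : Matrix (Fin n) (Fin n) (ZMod 2)).BlockTriangular id := mem_tri N.2
  have hNd : ∀ i, (N : Matrix (Fin n) (Fin n) (ZMod 2)) i i = 0 := by
    intro i
    rw [hNval]
    simp [Matrix.sub_apply, Matrix.one_apply_eq, hd i]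
  have hNn : N ^ n = 0 := by
    apply Subtype.ext
    push_cast
    exact pow_n_zero hNtri hNd
  have hN2L : N ^ (2 ^ L) = 0 := by
    have : N ^ (2 ^ L) = N ^ n * N ^ (2 ^ L - n) := by
      rw [← pow_add]; congr 1; omega
    rw [this, hNn, zero_mul]
  have hxeq : x = 1 + N := by rw [hNdef]; abel
  have hpow : x ^ (2 ^ L) = 1 := by
    rw [hxeq, add_pow_char_pow_of_commute 2 L (Commute.one_left N), one_pow, hN2L, add_zero]
  have hadd : 1 + (2 ^ L - 1) = 2 ^ L := by
    have := Nat.one_le_two_pow (n := L); omega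
  have hadd' : 2 ^ L - 1 + 1 = 2 ^ L := by omega
  have hx1 : x * x ^ (2 ^ L - 1) = 1 := by
    rw [← pow_succ', hadd', hpow]
  have hx2 : x ^ (2 ^ L - 1) * x = 1 := by
    rw [← pow_succ, hadd', hpow]
  exact ⟨hpow, ⟨⟨x, x ^ (2 ^ L - 1), hx1, hx2⟩, rfl⟩⟩

/-- the shift (Jordan) matrix -/
def Jm (n : ℕ) : Matrix (Fin n) (Fin n) (ZMod 2) :=
  Matrix.of fun i j => if (j : ℕ) = (i : ℕ) + 1 then 1 else 0

lemma Jm_tri : (Jm n).BlockTriangular id := by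
  intro i j hij
  have : (j : ℕ) < (i : ℕ) := hij
  simp only [Jm, Matrix.of_apply]
  rw [if_neg]; omega

lemma Jm_pow (k : ℕ) : ∀ i j : Fin n, ((Jm n) ^ k) i j
    = if (j : ℕ) = (i : ℕ) + k then 1 else 0 := by
  induction k with
  | zero =>
    intro i j
    rw [pow_zero, Matrix.one_apply]
    by_cases h : i = j
    · subst h; simp
    · rw [if_neg h, if_neg]
      intro hc
      exact h (Fin.ext (by omega)).symm
  | succ k ih =>
    intro i j
    rw [pow_succ, Matrix.mul_apply]
    by_cases h : (j : ℕ) = (i : ℕ) + (k + 1)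
    · have hik : (i : ℕ) + k < n := by have := j.isLt; omega
      rw [Finset.sum_eq_single (⟨(i : ℕ) + k, hik⟩ : Fin n)]
      · rw [ih, if_pos rfl, one_mul, if_pos h]
        simp only [Jm, Matrix.of_apply, Fin.val_mk]
        rw [if_pos (by omega)]
      · intro l _ hl
        rw [ih, if_neg, zero_mul]
        intro hc
        exact hl (Fin.ext hc)
      · intro hm; exact absurd (Finset.mem_univ _) hm
    · rw [if_neg h]
      apply Finset.sum_eq_zero
      intro l _
      by_cases hl : (l : ℕ) = (i : ℕ) + k
      · simp only [Jm, Matrix.of_apply]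
        rw [if_neg (by omega), mul_zero]
      · rw [ih, if_neg hl, zero_mul]

end TriAuxSec

theorem Tn_F2_almost_n_torsion_clean_iff (n : ℕ) (hn : 2 < n) :
    AlmostTorsionClean (Triangular n) n ↔ ∃ l : ℕ, 2 ≤ l ∧ n = 2 ^ l := by
  have hn0 : 0 < n := by omega
  haveI : Nonempty (Fin n) := ⟨⟨0, hn0⟩⟩
  haveI : Fact (Nat.Prime 2) := ⟨Nat.prime_two⟩
  constructor
  · intro h
    set J : Triangular n := ⟨Jm n, Jm_tri⟩ with hJdef
    obtain ⟨u, e, hu, hun, he, hre⟩ := h J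
    have hud : ∀ i, (u : Matrix (Fin n) (Fin n) (ZMod 2)) i i = 1 :=
      diag_one_of_isUnit hn0 hu
    have hreval : (Jm n) = (u : Matrix (Fin n) (Fin n) (ZMod 2))
        + (e : Matrix (Fin n) (Fin n) (ZMod 2)) := by
      have := congrArg (Subtype.val) hre
      push_cast at this
      exact this
    have hed : ∀ i, (e : Matrix (Fin n) (Fin n) (ZMod 2)) i i = 1 := by
      intro i
      have h0 : (Jm n) i i = 0 := by simp [Jm]
      have hh := congrFun (congrFun hreval i) i
      rw [h0, Matrix.add_apply, hud i] at hh
      exact zmod2_zero_eq_one_add _ hh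
    have heu : IsUnit e :=
      (unit_of_diag_one hn0 e hed n (le_of_lt (Nat.lt_two_pow_self (n := n)))).2
    have he1 : e = 1 := heu.mul_left_cancel (by rw [he, mul_one])
    subst he1
    have h2z : (1 : Triangular n) + 1 = 0 := by
      have h2 : (2 : Triangular n) = 0 := by
        exact_mod_cast CharP.cast_eq_zero (Triangular n) 2
      rw [one_add_one_eq_two, h2]
    have huJ : u = 1 + J := by
      have hJu : J = u + 1 := hre
      calc u = u + (1 + 1) := by rw [h2z, add_zero]
      _ = (u + 1) + 1 := by abel
      _ = 1 + J := by rw [← hJu, add_comm]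
    have hpow2 : u ^ (2 ^ n) = 1 :=
      (unit_of_diag_one hn0 u hud n (le_of_lt (Nat.lt_two_pow_self (n := n)))).1
    have hdvd : orderOf u ∣ Nat.gcd n (2 ^ n) :=
      Nat.dvd_gcd (orderOf_dvd_of_pow_eq_one hun) (orderOf_dvd_of_pow_eq_one hpow2)
    obtain ⟨l, hln, hgl⟩ := (Nat.dvd_prime_pow Nat.prime_two).mp
      (Nat.gcd_dvd_right n (2 ^ n))
    have hgcdpow : u ^ Nat.gcd n (2 ^ n) = 1 :=
      orderOf_dvd_iff_pow_eq_one.mp hdvd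
    rw [hgl] at hgcdpow
    have hJpow : J ^ (2 ^ l) = 0 := by
      have hthis : (1 : Triangular n) + J ^ (2 ^ l) = 1 := by
        rw [← one_pow (2 ^ l), ← add_pow_char_pow_of_commute 2 l (Commute.one_left J), ← huJ,
          hgcdpow, one_pow]
      exact add_left_cancel (show (1 : Triangular n) + J ^ (2 ^ l) = 1 + 0 by
        rw [hthis, add_zero])
    have hle : 2 ^ l ≤ n := by
      have hd : Nat.gcd n (2 ^ n) ∣ n := Nat.gcd_dvd_left _ _
      rw [hgl] at hd
      exact Nat.le_of_dvd hn0 hd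
    have heq : 2 ^ l = n := by
      by_contra hne
      have hlt : 2 ^ l < n := lt_of_le_of_ne hle hne
      have hzero : ((Jm n) ^ (2 ^ l)) ⟨0, hn0⟩ ⟨2 ^ l, hlt⟩ = 0 := by
        have hv := congrArg Subtype.val hJpow
        push_cast at hv
        rw [hv]; rfl
      rw [Jm_pow] at hzero
      simp at hzero
    refine ⟨l, ?_, heq.symm⟩
    by_contra hl2
    have : 2 ^ l ≤ 2 ^ 1 := Nat.pow_le_pow_right (by norm_num) (by omega)
    omega
  · rintro ⟨l, hl2, rfl⟩
    intro r
    set ev : Matrix (Fin (2 ^ l)) (Fin (2 ^ l)) (ZMod 2) :=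
      Matrix.diagonal (fun i => (r : Matrix _ _ (ZMod 2)) i i + 1) with hevdef
    have hevtri : ev.BlockTriangular id := Matrix.blockTriangular_diagonal _
    set e : Triangular (2 ^ l) := ⟨ev, hevtri⟩ with hedef
    have he : e * e = e := by
      apply Subtype.ext
      push_cast
      show ev * ev = ev
      rw [hevdef, Matrix.diagonal_mul_diagonal]
      exact congrArg Matrix.diagonal (funext fun i => zmod2_mul_self _)
    set u : Triangular (2 ^ l) := r - e with hudef
    have huval : (u : Matrix (Fin (2 ^ l)) (Fin (2 ^ l)) (ZMod 2))
        = (r : Matrix _ _ (ZMod 2)) - ev := by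
      push_cast [hudef, hedef]; ring
    have hud : ∀ i, (u : Matrix (Fin (2 ^ l)) (Fin (2 ^ l)) (ZMod 2)) i i = 1 := by
      intro i
      rw [huval, Matrix.sub_apply, hevdef, Matrix.diagonal_apply_eq]
      exact zmod2_sub_add_one _
    obtain ⟨hupow, huunit⟩ :=
      unit_of_diag_one (Nat.pow_pos (n := l) (by norm_num)) u hud l le_rfl
    refine ⟨u, e, huunit, hupow, he, ?_⟩
    rw [hudef]; abel
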